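/- Let r be a positive integer and let I be a homogeneous ideal of the multivariate polynomial ring over ℂ in variables x_0, …, x_n. Then there exist finitely many homogeneous polynomials f_1, …, f_m generating I such that ψ_r '' Z(I) = ⋂_{i=1}^m ψ_r '' Z(f_i), where Z(J) denotes the affine zero locus in Fin (n+1) → ℂ. (Every homogeneous ideal admits an r-th power basis: a generating set whose hypersurface powers cut out exactly the coordinate-wise r-th power of the variety.) -/

import Mathlib

open MvPolynomial

namespace PowerBasisAux

noncomputable section

variable {r : ℕ} {σ' : Type*}

/-- primitive `r`-th root of unity -/
def ω (r : ℕ) : ℂ := Complex.exp (2 * Real.pi * Complex.I / r)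

lemma homega (hr : 0 < r) : IsPrimitiveRoot (ω r) r :=
  Complex.isPrimitiveRoot_exp r hr.ne'

lemma omega_pow_r (hr : 0 < r) : ω r ^ r = 1 := (homega hr).pow_eq_one

lemma omega_pow_mod (hr : 0 < r) (m : ℕ) : ω r ^ (m % r) = ω r ^ m := by
  conv_rhs => rw [← Nat.div_add_mod m r]
  rw [pow_add, pow_mul, omega_pow_r hr, one_pow, one_mul]

/-- character of `ZMod r` -/
def χ (r : ℕ) (k : ZMod r) : ℂ := ω r ^ k.val

lemma chi_add (hr : 0 < r) (a b : ZMod r) : χ r (a + b) = χ r a * χ r b := by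
  haveI : NeZero r := ⟨hr.ne'⟩
  rw [χ, χ, χ, ZMod.val_add, omega_pow_mod hr, pow_add]

lemma chi_zero (hr : 0 < r) : χ r (0 : ZMod r) = 1 := by
  haveI : NeZero r := ⟨hr.ne'⟩
  rw [χ, ZMod.val_zero, pow_zero]

lemma chi_pow_r (hr : 0 < r) (k : ZMod r) : χ r k ^ r = 1 := by
  rw [χ, ← pow_mul, mul_comm, pow_mul, omega_pow_r hr, one_pow]

variable (r) in
/-- scaling of variables by roots of unity -/
def T {n : ℕ} (v : Fin (n + 1) → ZMod r) :
    MvPolynomial (Fin (n + 1)) ℂ →ₐ[ℂ] MvPolynomial (Fin (n + 1)) ℂ :=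
  aeval fun i => C (χ r (v i)) * X i

variable {n : ℕ}

lemma eval_T (v : Fin (n + 1) → ZMod r) (x : Fin (n + 1) → ℂ)
    (p : MvPolynomial (Fin (n + 1)) ℂ) :
    eval x (T r v p) = eval (fun i => χ r (v i) * x i) p := by
  induction p using MvPolynomial.induction_on with
  | C a => simp [T]
  | add p q hp hq => simp [map_add, hp, hq]
  | mul_X p i hp =>
    have h1 : T r v (p * X i) = T r v p * (C (χ r (v i)) * X i) := by
      rw [map_mul]; congr 1; exact aeval_X _ i
    rw [h1]; simp [hp]

lemma T_comp (hr : 0 < r) (v w : Fin (n + 1) → ZMod r)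
    (p : MvPolynomial (Fin (n + 1)) ℂ) :
    T r v (T r w p) = T r (v + w) p := by
  simp only [T]
  rw [comp_aeval_apply]
  refine congrArg (fun gg => aeval gg p) (funext fun i => ?_)
  rw [map_mul, aeval_C, aeval_X, MvPolynomial.algebraMap_eq, Pi.add_apply, chi_add hr,
    ← mul_assoc, ← map_mul, mul_comm (χ r (w i))]

lemma T_zero (hr : 0 < r) (p : MvPolynomial (Fin (n + 1)) ℂ) :
    T r (0 : Fin (n + 1) → ZMod r) p = p := by
  rw [T]
  have : (fun i : Fin (n + 1) => C (χ r ((0 : Fin (n + 1) → ZMod r) i)) * X i)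
      = (X : Fin (n + 1) → MvPolynomial (Fin (n + 1)) ℂ) := by
    funext i
    rw [Pi.zero_apply, chi_zero hr, map_one, one_mul]
  rw [this, aeval_X_left_apply]

lemma T_homog (v : Fin (n + 1) → ZMod r) {p : MvPolynomial (Fin (n + 1)) ℂ} {d : ℕ}
    (hp : p.IsHomogeneous d) : (T r v p).IsHomogeneous d := by
  have := hp.eval₂ (algebraMap ℂ (MvPolynomial (Fin (n + 1)) ℂ))
    (fun i => C (χ r (v i)) * X i) (fun c => by
      rw [MvPolynomial.algebraMap_eq]; exact isHomogeneous_C _ _)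
    (fun i => isHomogeneous_C_mul_X _ _)
  rw [one_mul] at this
  rw [T, aeval_def]
  exact this

lemma coeff_prod_isHomogeneous {α : Type*} [DecidableEq α] (s : Finset α)
    (a : α → MvPolynomial σ' ℂ) (d : ℕ)
    (h : ∀ v ∈ s, (a v).IsHomogeneous d) (i : ℕ) :
    ((∏ v ∈ s, (Polynomial.X - Polynomial.C (a v))).coeff i).IsHomogeneous
      ((s.card - i) * d) := by
  induction s using Finset.induction_on generalizing i with
  | empty =>
    cases i with
    | zero => simpa using isHomogeneous_one σ' ℂ
    | succ j => simpa [Polynomial.coeff_one] using isHomogeneous_zero σ' ℂ 0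
  | insert v s hvs ih =>
    have hv : (a v).IsHomogeneous d := h v (Finset.mem_insert_self _ _)
    have hs : ∀ w ∈ s, (a w).IsHomogeneous d := fun w hw => h w (Finset.mem_insert_of_mem hw)
    have hmon : (∏ w ∈ s, (Polynomial.X - Polynomial.C (a w))).Monic :=
      Polynomial.monic_prod_of_monic _ _ fun w _ => Polynomial.monic_X_sub_C _
    have hdeg : (∏ w ∈ s, (Polynomial.X - Polynomial.C (a w))).natDegree = s.card := by
      rw [Polynomial.natDegree_prod_of_monic _ _ fun w _ => Polynomial.monic_X_sub_C _]
      simp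
    rw [Finset.prod_insert hvs, Finset.card_insert_of_notMem hvs, sub_mul,
      Polynomial.coeff_sub]
    cases i with
    | zero =>
      rw [Polynomial.mul_coeff_zero, Polynomial.coeff_X_zero, zero_mul, zero_sub,
        Polynomial.coeff_C_mul]
      have := (hv.mul (ih hs 0)).neg
      rw [Nat.sub_zero] at this ⊢
      have hdd : d + s.card * d = (s.card + 1) * d := by ring
      rwa [hdd] at this
    | succ j =>
      rw [Polynomial.coeff_X_mul, Polynomial.coeff_C_mul, Nat.succ_sub_succ_eq_sub]
      by_cases hj : j < s.card
      · refine (ih hs j).sub ?_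
        have := hv.mul (ih hs (j + 1))
        have hdd : d + (s.card - (j + 1)) * d = (s.card - j) * d := by
          have h1 : s.card - j = (s.card - (j + 1)) + 1 := by omega
          rw [h1]; ring
        rwa [hdd] at this
      · refine (ih hs j).sub ?_
        rw [Polynomial.coeff_eq_zero_of_natDegree_lt (by omega), mul_zero]
        exact isHomogeneous_zero _ _ _

end
end PowerBasisAux
open PowerBasisAux in
/-- Every homogeneous ideal admits an `r`-th power basis: a finite generating set of
homogeneous polynomials `f₁, …, f_k` such that the coordinate-wise `r`-th power of
`Z(I)` is exactly the intersection of the coordinate-wise `r`-th powers of the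
hypersurfaces `Z(f_i)`. -/
theorem exists_power_basis (r n : ℕ) (hr : 0 < r)
    (I : Ideal (MvPolynomial (Fin (n + 1)) ℂ))
    (hI : ∃ S : Set (MvPolynomial (Fin (n + 1)) ℂ),
      (∀ f ∈ S, ∃ d, f.IsHomogeneous d) ∧ I = Ideal.span S) :
    ∃ (k : ℕ) (f : Fin k → MvPolynomial (Fin (n + 1)) ℂ),
      (∀ i, ∃ d, (f i).IsHomogeneous d) ∧
      I = Ideal.span (Set.range f) ∧
      (fun x : Fin (n + 1) → ℂ => fun i => (x i) ^ r) '' {x | ∀ g ∈ I, eval x g = 0}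
        = ⋂ i, (fun x : Fin (n + 1) → ℂ => fun j => (x j) ^ r) '' {x | eval x (f i) = 0} := by
  classical
  haveI : NeZero r := ⟨hr.ne'⟩
  obtain ⟨S, hShom, hIS⟩ := hI
  -- extract a finite homogeneous generating set
  have hfg : I.FG := IsNoetherian.noetherian I
  obtain ⟨B, hB⟩ := hfg
  have hmem : ∀ b ∈ B, ∃ t : Finset (MvPolynomial (Fin (n + 1)) ℂ),
      ↑t ⊆ S ∧ b ∈ Ideal.span (t : Set (MvPolynomial (Fin (n + 1)) ℂ)) := by
    intro b hb
    have hbI : b ∈ I := by rw [← hB]; exact Ideal.subset_span hb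
    rw [hIS] at hbI
    exact Submodule.mem_span_finite_of_mem_span hbI
  choose t ht1 ht2 using hmem
  set T0 : Finset (MvPolynomial (Fin (n + 1)) ℂ) := B.attach.biUnion (fun b => t b.1 b.2) with hT0
  have hT0S : (T0 : Set (MvPolynomial (Fin (n + 1)) ℂ)) ⊆ S := by
    intro p hp
    simp only [hT0, Finset.coe_biUnion, Set.mem_iUnion, Finset.mem_coe] at hp
    obtain ⟨b, _, hp⟩ := hp
    exact ht1 _ _ hp
  have hT0span : Ideal.span (T0 : Set (MvPolynomial (Fin (n + 1)) ℂ)) = I := by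
    apply le_antisymm
    · rw [hIS]; exact Ideal.span_mono hT0S
    · rw [← hB, Ideal.span_le]
      intro b hb
      refine Ideal.span_mono (fun p hp => ?_) (ht2 b hb)
      have hp' : p ∈ t b hb := Finset.mem_coe.mp hp
      have hmem2 : p ∈ T0 := by
        rw [hT0]
        exact Finset.mem_biUnion.mpr ⟨⟨b, hb⟩, Finset.mem_attach _ _, hp'⟩
      exact Finset.mem_coe.mpr hmem2
  -- enumerate the generators
  set m := T0.card with hm
  set g : Fin m → MvPolynomial (Fin (n + 1)) ℂ := fun j => (T0.equivFin.symm j : _) with hg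
  have hgT0 : ∀ j, g j ∈ T0 := fun j => (T0.equivFin.symm j).2
  have hrangeg : Set.range g = (T0 : Set (MvPolynomial (Fin (n + 1)) ℂ)) := by
    ext p
    constructor
    · rintro ⟨j, rfl⟩; exact hgT0 j
    · intro hp; exact ⟨T0.equivFin ⟨p, hp⟩, by simp [hg]⟩
  have hgI : ∀ j, g j ∈ I := fun j => hT0span ▸ Ideal.subset_span (hgT0 j)
  have hghom : ∀ j, ∃ d, (g j).IsHomogeneous d := fun j => hShom _ (hT0S (hgT0 j))
  choose dg hdg using hghom
  -- the group and the auxiliary polynomials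
  set G := (Fin (n + 1) → ZMod r) with hG
  set N := Fintype.card G with hN
  have hNpos : 0 < N := Fintype.card_pos
  set q : (G → Fin m) → MvPolynomial (Fin (n + 1)) ℂ :=
    fun a => ∏ w : G, T r w (g (a w)) with hq
  set F : (G → Fin m) → Polynomial (MvPolynomial (Fin (n + 1)) ℂ) :=
    fun a => ∏ v : G, (Polynomial.X - Polynomial.C (T r v (q a))) with hF
  set c : (G → Fin m) → ℕ → MvPolynomial (Fin (n + 1)) ℂ :=
    fun a i => (F a).coeff i with hc
  have hFmonic : ∀ a, (F a).Monic :=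
    fun a => Polynomial.monic_prod_of_monic _ _ fun v _ => Polynomial.monic_X_sub_C _
  have hFdeg : ∀ a, (F a).natDegree = N := by
    intro a
    rw [hF, Polynomial.natDegree_prod_of_monic _ _ fun v _ => Polynomial.monic_X_sub_C _]
    simp [hN]
  -- translates of q a
  have hTq : ∀ a v, T r v (q a) = ∏ w : G, T r (v + w) (g (a w)) := by
    intro a v
    rw [hq, map_prod]
    exact Finset.prod_congr rfl fun w _ => T_comp hr v w _
  have hqI : ∀ a v, T r v (q a) ∈ I := by
    intro a v
    rw [hTq]
    rw [← Finset.mul_prod_erase Finset.univ _ (Finset.mem_univ (-v))]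
    apply Ideal.mul_mem_right
    rw [add_neg_cancel, T_zero hr]
    exact hgI _
  -- membership of the coefficients in I
  have hcI : ∀ a (i : ℕ), i < N → c a i ∈ I := by
    intro a i hi
    set J : Ideal (MvPolynomial (Fin (n + 1)) ℂ) :=
      Ideal.span (Set.range fun v : G => T r v (q a)) with hJ
    have hJI : J ≤ I := by
      rw [hJ, Ideal.span_le]; rintro p ⟨v, rfl⟩; exact hqI a v
    have hmap : Polynomial.map (Ideal.Quotient.mk J) (F a) = Polynomial.X ^ N := by
      rw [hF, Polynomial.map_prod]
      have : ∀ v ∈ (Finset.univ : Finset G),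
          Polynomial.map (Ideal.Quotient.mk J)
            (Polynomial.X - Polynomial.C (T r v (q a))) = Polynomial.X := by
        intro v _
        have hvmem : T r v (q a) ∈ J := by
          rw [hJ]
          exact Ideal.subset_span (Set.mem_range_self v)
        rw [Polynomial.map_sub, Polynomial.map_X, Polynomial.map_C,
          Ideal.Quotient.eq_zero_iff_mem.mpr hvmem, map_zero, sub_zero]
      rw [Finset.prod_congr rfl this, Finset.prod_const, Finset.card_univ, hN]
    have hzero : Ideal.Quotient.mk J (c a i) = 0 := by
      have h2 := congrArg (fun P => Polynomial.coeff P i) hmap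
      simp only [Polynomial.coeff_map, Polynomial.coeff_X_pow] at h2
      rw [if_neg hi.ne] at h2
      exact h2
    exact hJI (Ideal.Quotient.eq_zero_iff_mem.mp hzero)
  -- homogeneity of the coefficients
  have hqhom : ∀ a v, (T r v (q a)).IsHomogeneous (∑ w : G, dg (a w)) := by
    intro a v
    apply T_homog
    rw [hq]
    exact IsHomogeneous.prod _ _ _ fun w _ => T_homog w (hdg (a w))
  have hchom : ∀ a (i : ℕ), ∃ d, (c a i).IsHomogeneous d := by
    intro a i
    exact ⟨_, coeff_prod_isHomogeneous Finset.univ _ _ (fun v _ => hqhom a v) i⟩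
  -- invariance of the coefficients
  have hcinv : ∀ a (i : ℕ) v, T r v (c a i) = c a i := by
    intro a i v
    have hmap : Polynomial.map (T r v).toRingHom (F a) = F a := by
      rw [hF, Polynomial.map_prod]
      have h1 : ∀ w ∈ (Finset.univ : Finset G),
          Polynomial.map (T r v).toRingHom
            (Polynomial.X - Polynomial.C (T r w (q a)))
          = Polynomial.X - Polynomial.C (T r (v + w) (q a)) := by
        intro w _
        rw [Polynomial.map_sub, Polynomial.map_X, Polynomial.map_C]
        exact congrArg (fun z => Polynomial.X - Polynomial.C z) (T_comp hr v w (q a))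
      rw [Finset.prod_congr rfl h1]
      exact Fintype.prod_equiv (Equiv.addLeft v)
        (fun w => Polynomial.X - Polynomial.C (T r (v + w) (q a)))
        (fun w => Polynomial.X - Polynomial.C (T r w (q a))) (fun w => rfl)
    have h2 := congrArg (fun P => Polynomial.coeff P i) hmap
    rw [Polynomial.coeff_map] at h2
    exact h2
  -- the key algebraic identity
  have hkey : ∀ a (x : Fin (n + 1) → ℂ),
      (∀ i : ℕ, i < N → eval x (c a i) = 0) → eval x (q a) = 0 := by
    intro a x h
    have h0 : Polynomial.eval (q a) (F a) = 0 := by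
      rw [hF, Polynomial.eval_prod]
      apply Finset.prod_eq_zero (Finset.mem_univ (0 : G))
      rw [Polynomial.eval_sub, Polynomial.eval_X, Polynomial.eval_C, T_zero hr, sub_self]
    have h1 : (0 : MvPolynomial (Fin (n + 1)) ℂ)
        = ∑ i ∈ Finset.range (N + 1), c a i * q a ^ i := by
      rw [← h0, Polynomial.eval_eq_sum_range, hFdeg a]
    have h2 := congrArg (eval x) h1
    rw [map_zero, map_sum] at h2
    simp only [map_mul, map_pow] at h2
    rw [Finset.sum_range_succ] at h2
    rw [Finset.sum_eq_zero (fun i hi => by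
      rw [h i (Finset.mem_range.mp hi), zero_mul]), zero_add] at h2
    have hcN : c a N = 1 := by
      rw [hc]
      have := (hFmonic a).coeff_natDegree
      rwa [hFdeg a] at this
    rw [hcN, map_one, one_mul] at h2
    exact pow_eq_zero_iff hNpos.ne' |>.mp h2.symm
  -- assemble the family
  set ι := Fin m ⊕ ((G → Fin m) × Fin N) with hι
  set FF : ι → MvPolynomial (Fin (n + 1)) ℂ :=
    Sum.elim g (fun p => c p.1 p.2.1) with hFF
  set e := Fintype.equivFin ι with he
  have hFFhom : ∀ u : ι, ∃ d, (FF u).IsHomogeneous d := by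
    rintro (j | ⟨a, i0⟩)
    · exact ⟨dg j, hdg j⟩
    · exact hchom a i0.1
  have hFFI : ∀ u : ι, FF u ∈ I := by
    rintro (j | ⟨a, i0⟩)
    · exact hgI j
    · exact hcI a i0.1 i0.2
  refine ⟨Fintype.card ι, fun i => FF (e.symm i), ?_, ?_, ?_⟩
  · -- homogeneity
    exact fun i => hFFhom (e.symm i)
  · -- generation
    have hrangeFF : Set.range (fun i => FF (e.symm i)) = Set.range FF :=
      e.symm.surjective.range_comp FF
    rw [hrangeFF, hFF, Set.Sum.elim_range]
    apply le_antisymm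
    · rw [← hT0span, ← hrangeg]
      exact Ideal.span_mono Set.subset_union_left
    · rw [Ideal.span_le]
      rintro p (⟨j, rfl⟩ | ⟨⟨a, i0⟩, rfl⟩)
      · exact hgI j
      · exact hcI a i0.1 i0.2
  · -- the set equality
    ext y
    constructor
    · rintro ⟨x, hx, rfl⟩
      rw [Set.mem_iInter]
      intro i
      exact ⟨x, hx _ (hFFI (e.symm i)), rfl⟩
    · intro hy
      have hroot : ∀ i, ∃ z : ℂ, z ^ r = y i :=
        fun i => IsAlgClosed.exists_pow_nat_eq _ hr
      choose x hx using hroot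
      -- each invariant coefficient vanishes at x
      have Hc : ∀ a (i : ℕ), i < N → eval x (c a i) = 0 := by
        intro a i hi
        have hyi := Set.mem_iInter.mp hy (e (Sum.inr (a, ⟨i, hi⟩)))
        simp only [Equiv.symm_apply_apply, hFF, Sum.elim_inr] at hyi
        obtain ⟨x', hx', hxy⟩ := hyi
        have hx'r : ∀ i0, x' i0 ^ r = x i0 ^ r := by
          intro i0
          have h1 : x' i0 ^ r = y i0 := congrFun hxy i0
          rw [h1, hx]
        have hv : ∀ i0 : Fin (n + 1), ∃ u : ZMod r, χ r u * x i0 = x' i0 := by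
          intro i0
          by_cases h0 : x i0 = 0
          · refine ⟨0, ?_⟩
            have : x' i0 = 0 := by
              have := hx'r i0
              rw [h0, zero_pow hr.ne'] at this
              exact pow_eq_zero_iff hr.ne' |>.mp this
            rw [h0, this, mul_zero]
          · have hpow : (x' i0 / x i0) ^ r = 1 := by
              rw [div_pow, hx'r i0, div_self (pow_ne_zero r h0)]
            obtain ⟨k, hk, hωk⟩ := (homega hr).eq_pow_of_pow_eq_one hpow
            refine ⟨(k : ZMod r), ?_⟩
            have hval : χ r ((k : ZMod r)) = ω r ^ k := by
              rw [χ, ZMod.val_natCast, omega_pow_mod hr]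
            rw [hval, hωk, div_mul_cancel₀ _ h0]
        choose v hvv using hv
        have hscal : x' = fun i0 => χ r (v i0) * x i0 := by
          funext i0; rw [hvv i0]
        calc eval x (c a i) = eval x (T r v (c a i)) := by rw [hcinv a i v]
          _ = eval (fun i0 => χ r (v i0) * x i0) (c a i) := eval_T v x _
          _ = eval x' (c a i) := by rw [← hscal]
          _ = 0 := hx'
      -- each q a vanishes at x
      have Hq : ∀ a, eval x (q a) = 0 := fun a => hkey a x (Hc a)
      -- find a common twist killing all generators
      have hcommon : ∃ v : G, ∀ j, eval (fun i0 => χ r (v i0) * x i0) (g j) = 0 := by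
        by_contra hcon
        push_neg at hcon
        choose a ha using hcon
        have h1 : eval x (q a) ≠ 0 := by
          rw [hq, map_prod]
          apply Finset.prod_ne_zero_iff.mpr
          intro w _
          rw [eval_T]
          exact ha w
        exact h1 (Hq a)
      obtain ⟨v, hvz⟩ := hcommon
      refine ⟨fun i0 => χ r (v i0) * x i0, ?_, ?_⟩
      · intro p hp
        have hker : I ≤ RingHom.ker (eval (fun i0 => χ r (v i0) * x i0)) := by
          rw [← hT0span, Ideal.span_le, ← hrangeg]
          rintro p' ⟨j, rfl⟩
          exact hvz j
        exact hker hp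
      · funext i0
        show (χ r (v i0) * x i0) ^ r = y i0
        rw [mul_pow, chi_pow_r hr, one_mul, hx]
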